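/- Involution theorem: for f ∈ O, B²f = f if and only if f is monotonically increasing and convex. -/

import Mathlib

open Finset

noncomputable def inn {n : ℕ} (p q : Fin n → ℝ) : ℝ := ∑ i, p i * q i

noncomputable def nrm {n : ℕ} (p : Fin n → ℝ) : ℝ := Real.sqrt (∑ i, (p i)^2)

def Orth (n : ℕ) : Set (Fin n → ℝ) := {p | ∀ i, 0 ≤ p i}

noncomputable def B {n : ℕ} (f : (Fin n → ℝ) → ℝ) (p : Fin n → ℝ) : ℝ :=
  sSup {x | ∃ q ∈ Orth n, q ≠ 0 ∧ x = inn p q / f q}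

def MemO {n : ℕ} (f : (Fin n → ℝ) → ℝ) : Prop :=
  (∀ p ∈ Orth n, ∀ l : ℝ, 0 < l → f (l • p) = l * f p) ∧
  (∀ p ∈ Orth n, p ≠ 0 → 0 < f p) ∧
  (∃ c₁ c₂ : ℝ, 0 < c₁ ∧ 0 < c₂ ∧
    ∀ p ∈ Orth n, c₁ * nrm p ≤ f p ∧ f p ≤ c₂ * nrm p) ∧
  ContinuousOn f (Orth n)

def PositiveConvex {n : ℕ} (C : Set (Fin n → ℝ)) : Prop :=
  Convex ℝ C ∧ ∀ p₀ ∈ Orth n, p₀ ∉ C → ∃ q ∈ Orth n, ∃ γ : ℝ, 0 < γ ∧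
    γ ≤ inn p₀ q ∧ ∀ p ∈ C, inn p q < γ



lemma nrm_nonneg {n : ℕ} (p : Fin n → ℝ) : 0 ≤ nrm p := Real.sqrt_nonneg _

lemma nrm_pos {n : ℕ} {p : Fin n → ℝ} (hp : p ≠ 0) : 0 < nrm p := by
  obtain ⟨i, hi⟩ := Function.ne_iff.mp hp
  apply Real.sqrt_pos.mpr
  apply Finset.sum_pos' (fun j _ => sq_nonneg _) ⟨i, Finset.mem_univ i, pow_pos (abs_pos.mpr hi) 2 |> (by simpa [sq_abs] using ·)⟩

lemma inn_comm {n : ℕ} (p q : Fin n → ℝ) : inn p q = inn q p := by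
  simp [inn, mul_comm]

lemma inn_self {n : ℕ} (p : Fin n → ℝ) : inn p p = nrm p ^ 2 := by
  rw [nrm, Real.sq_sqrt (by positivity)]
  simp [inn, sq]

lemma inn_le_nrm {n : ℕ} (p q : Fin n → ℝ) : inn p q ≤ nrm p * nrm q :=
  Real.sum_mul_le_sqrt_mul_sqrt _ _ _

lemma inn_nonneg {n : ℕ} {p q : Fin n → ℝ} (hp : p ∈ Orth n) (hq : q ∈ Orth n) :
    0 ≤ inn p q := Finset.sum_nonneg fun i _ => mul_nonneg (hp i) (hq i)

lemma inn_add_left {n : ℕ} (p r q : Fin n → ℝ) : inn (p + r) q = inn p q + inn r q := by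
  simp [inn, add_mul, Finset.sum_add_distrib]

lemma inn_smul_left {n : ℕ} (a : ℝ) (p q : Fin n → ℝ) : inn (a • p) q = a * inn p q := by
  simp [inn, Finset.mul_sum, mul_assoc]

lemma orth_closed {n : ℕ} : IsClosed (Orth n) := by
  have : Orth n = ⋂ i, {p : Fin n → ℝ | 0 ≤ p i} := by ext p; simp [Orth, Set.mem_iInter]
  rw [this]
  exact isClosed_iInter fun i => isClosed_le continuous_const (continuous_apply i)

lemma orth_convex {n : ℕ} : Convex ℝ (Orth n) := by
  intro p hp q hq a b ha hb _
  intro i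
  have : (a • p + b • q) i = a * p i + b * q i := by simp
  rw [this]
  exact add_nonneg (mul_nonneg ha (hp i)) (mul_nonneg hb (hq i))

lemma phi_rep {n : ℕ} (φ : (Fin n → ℝ) →L[ℝ] ℝ) (p : Fin n → ℝ) :
    φ p = ∑ i, p i * φ (Pi.single i 1) := by
  have hrep : p = ∑ i, p i • (Pi.single i (1:ℝ) : Fin n → ℝ) := by
    ext j
    simp [Pi.single_apply]
  conv_lhs => rw [hrep]
  simp [map_sum, map_smul]


lemma BS_bddAbove {n : ℕ} {f : (Fin n → ℝ) → ℝ} {c : ℝ} (hc : 0 < c)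
    (hlb : ∀ q ∈ Orth n, q ≠ 0 → c * nrm q ≤ f q) (p : Fin n → ℝ) :
    BddAbove {x | ∃ q ∈ Orth n, q ≠ 0 ∧ x = inn p q / f q} := by
  refine ⟨nrm p / c, ?_⟩
  rintro x ⟨q, hq, hq0, rfl⟩
  have hnq := nrm_pos hq0
  have hfq : 0 < f q := lt_of_lt_of_le (by positivity) (hlb q hq hq0)
  rw [div_le_div_iff₀ hfq hc]
  calc inn p q * c ≤ (nrm p * nrm q) * c := mul_le_mul_of_nonneg_right (inn_le_nrm p q) hc.le
    _ = nrm p * (c * nrm q) := by ring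
    _ ≤ nrm p * f q := mul_le_mul_of_nonneg_left (hlb q hq hq0) (nrm_nonneg p)

lemma B_lb {n : ℕ} {f : (Fin n → ℝ) → ℝ} {c c₂ : ℝ} (hc : 0 < c) (hc₂ : 0 < c₂)
    (hlb : ∀ q ∈ Orth n, q ≠ 0 → c * nrm q ≤ f q)
    (hub : ∀ q ∈ Orth n, q ≠ 0 → f q ≤ c₂ * nrm q)
    {q : Fin n → ℝ} (hq : q ∈ Orth n) (hq0 : q ≠ 0) :
    (1 / c₂) * nrm q ≤ B f q := by
  have hnq := nrm_pos hq0
  have hfq : 0 < f q := lt_of_lt_of_le (by positivity) (hlb q hq hq0)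
  have hmem : inn q q / f q ∈ {x | ∃ r ∈ Orth n, r ≠ 0 ∧ x = inn q r / f r} :=
    ⟨q, hq, hq0, rfl⟩
  have h1 : (1 / c₂) * nrm q ≤ inn q q / f q := by
    rw [le_div_iff₀ hfq, inn_self]
    calc 1 / c₂ * nrm q * f q ≤ 1 / c₂ * nrm q * (c₂ * nrm q) :=
          mul_le_mul_of_nonneg_left (hub q hq hq0) (by positivity)
      _ = nrm q ^ 2 := by field_simp
  exact h1.trans (le_csSup (BS_bddAbove hc hlb q) hmem)

lemma B_pos {n : ℕ} {f : (Fin n → ℝ) → ℝ} {c c₂ : ℝ} (hc : 0 < c) (hc₂ : 0 < c₂)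
    (hlb : ∀ q ∈ Orth n, q ≠ 0 → c * nrm q ≤ f q)
    (hub : ∀ q ∈ Orth n, q ≠ 0 → f q ≤ c₂ * nrm q)
    {q : Fin n → ℝ} (hq : q ∈ Orth n) (hq0 : q ≠ 0) : 0 < B f q :=
  lt_of_lt_of_le (by have := nrm_pos hq0; positivity) (B_lb hc hc₂ hlb hub hq hq0)

theorem involution {n : ℕ} (f : (Fin n → ℝ) → ℝ) (hf : MemO f) :
    (∀ p ∈ Orth n, B (B f) p = f p) ↔
      ((∀ p ∈ Orth n, ∀ q ∈ Orth n, f p ≤ f (p + q)) ∧ ConvexOn ℝ (Orth n) f) := by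
  obtain ⟨hhom, hpos, ⟨c₁, c₂, hc₁, hc₂, hbd⟩, hcont⟩ := hf
  have hzero : (0 : Fin n → ℝ) ∈ Orth n := fun i => le_refl 0
  have hf0 : f 0 = 0 := by
    have h1 := (hbd 0 hzero).1; have h2 := (hbd 0 hzero).2
    have hn0 : nrm (0 : Fin n → ℝ) = 0 := by simp [nrm]
    rw [hn0] at h1 h2; linarith
  have hflb : ∀ q ∈ Orth n, q ≠ 0 → c₁ * nrm q ≤ f q := fun q hq _ => (hbd q hq).1
  have hfub : ∀ q ∈ Orth n, q ≠ 0 → f q ≤ c₂ * nrm q := fun q hq _ => (hbd q hq).2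
  have hic₂ : (0:ℝ) < 1 / c₂ := by positivity
  have hglb : ∀ q ∈ Orth n, q ≠ 0 → (1/c₂) * nrm q ≤ B f q :=
    fun q hq hq0 => B_lb hc₁ hc₂ hflb hfub hq hq0
  have hgpos : ∀ q ∈ Orth n, q ≠ 0 → 0 < B f q :=
    fun q hq hq0 => B_pos hc₁ hc₂ hflb hfub hq hq0
  have hgbdd : ∀ p, BddAbove {x | ∃ q ∈ Orth n, q ≠ 0 ∧ x = inn p q / B f q} :=
    BS_bddAbove hic₂ hglb
  rcases Nat.eq_zero_or_pos n with hn | hn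
  · subst hn
    have hempty : ∀ p, B (B f) p = 0 := by
      intro p
      have hS : {x | ∃ q ∈ Orth 0, q ≠ 0 ∧ x = inn p q / B f q} = ∅ := by
        ext x; simp only [Set.mem_setOf_eq, Set.mem_empty_iff_false, iff_false]
        rintro ⟨q, _, hq0, _⟩; exact hq0 (Subsingleton.elim q 0)
      show sSup _ = (0:ℝ)
      rw [hS, Real.sSup_empty]
    constructor
    · intro _
      refine ⟨fun p _ q _ => by rw [Subsingleton.elim (p+q) p], orth_convex, ?_⟩
      intro p hp q hq a b ha hb hab
      rw [Subsingleton.elim (a • p + b • q) (0 : Fin 0 → ℝ),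
        Subsingleton.elim p (0 : Fin 0 → ℝ), Subsingleton.elim q (0 : Fin 0 → ℝ), hf0]
      simp
    · intro _ p hp
      rw [hempty, Subsingleton.elim p (0 : Fin 0 → ℝ), hf0]
  -- n ≥ 1
  have hone : (fun _ : Fin n => (1:ℝ)) ∈ Orth n := fun i => zero_le_one
  have hone0 : (fun _ : Fin n => (1:ℝ)) ≠ 0 := by
    intro h
    have := congrFun h ⟨0, hn⟩
    norm_num at this
  have hne : ∀ p : Fin n → ℝ,
      {x | ∃ q ∈ Orth n, q ≠ 0 ∧ x = inn p q / B f q}.Nonempty :=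
    fun p => ⟨_, (fun _ => 1), hone, hone0, rfl⟩
  have hneF : ∀ p : Fin n → ℝ,
      {x | ∃ q ∈ Orth n, q ≠ 0 ∧ x = inn p q / f q}.Nonempty :=
    fun p => ⟨_, (fun _ => 1), hone, hone0, rfl⟩
  constructor
  · -- B²f = f → monotone ∧ convex
    intro hB
    constructor
    · intro p hp q hq
      have hpq : p + q ∈ Orth n := fun i => add_nonneg (hp i) (hq i)
      rw [← hB p hp, ← hB _ hpq]
      refine csSup_le (hne p) ?_
      rintro x ⟨r, hr, hr0, rfl⟩
      have hgr := hgpos r hr hr0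
      refine le_trans ?_ (le_csSup (hgbdd (p+q)) ⟨r, hr, hr0, rfl⟩)
      have : inn p r ≤ inn (p + q) r := by
        rw [inn_add_left]
        have := inn_nonneg hq hr
        linarith
      exact div_le_div_of_nonneg_right this hgr.le
    · refine ⟨orth_convex, ?_⟩
      intro p hp q hq a b ha hb hab
      have hmem : a • p + b • q ∈ Orth n := orth_convex hp hq ha hb hab
      rw [← hB p hp, ← hB q hq, ← hB _ hmem]
      simp only [smul_eq_mul]
      refine csSup_le (hne _) ?_
      rintro x ⟨r, hr, hr0, rfl⟩
      have hgr := hgpos r hr hr0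
      have h1 : inn (a • p + b • q) r / B f r
          = a * (inn p r / B f r) + b * (inn q r / B f r) := by
        rw [inn_add_left, inn_smul_left, inn_smul_left]
        field_simp
      rw [h1]
      have e1 : inn p r / B f r ≤ B (B f) p := le_csSup (hgbdd p) ⟨r, hr, hr0, rfl⟩
      have e2 : inn q r / B f r ≤ B (B f) q := le_csSup (hgbdd q) ⟨r, hr, hr0, rfl⟩
      exact add_le_add (mul_le_mul_of_nonneg_left e1 ha) (mul_le_mul_of_nonneg_left e2 hb)
  · rintro ⟨hmono, hconv⟩
    intro p₀ hp₀
    by_cases hp0 : p₀ = 0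
    · subst hp0
      rw [hf0]
      apply le_antisymm
      · refine Real.sSup_le ?_ le_rfl
        rintro x ⟨r, hr, hr0, rfl⟩
        rw [show inn (0 : Fin n → ℝ) r = 0 from by simp [inn], zero_div]
      · refine le_csSup (hgbdd 0) ⟨(fun _ => 1), hone, hone0, ?_⟩
        rw [show inn (0 : Fin n → ℝ) (fun _ => 1) = 0 from by simp [inn], zero_div]
    · have hfp₀ : 0 < f p₀ := hpos p₀ hp₀ hp0
      apply le_antisymm
      · refine Real.sSup_le ?_ hfp₀.le
        rintro x ⟨r, hr, hr0, rfl⟩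
        have hgr := hgpos r hr hr0
        rw [div_le_iff₀ hgr]
        have hg1 : inn r p₀ / f p₀ ≤ B f r :=
          le_csSup (BS_bddAbove hc₁ hflb r) ⟨p₀, hp₀, hp0, rfl⟩
        calc inn p₀ r = f p₀ * (inn r p₀ / f p₀) := by rw [inn_comm]; field_simp
          _ ≤ f p₀ * B f r := mul_le_mul_of_nonneg_left hg1 hfp₀.le
      · have hBnonneg : 0 ≤ B (B f) p₀ := by
          refine le_trans ?_ (le_csSup (hgbdd p₀) ⟨(fun _ => 1), hone, hone0, rfl⟩)
          exact div_nonneg (inn_nonneg hp₀ hone) (hgpos _ hone hone0).le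
        by_contra hcon
        push_neg at hcon
        set t := (B (B f) p₀ + f p₀) / 2 with ht
        have ht0 : 0 < t := by rw [ht]; linarith
        have ht1 : t < f p₀ := by rw [ht]; linarith
        have ht2 : B (B f) p₀ < t := by rw [ht]; linarith
        set C : Set (Fin n → ℝ) := {p | p ∈ Orth n ∧ f p ≤ t} with hC
        have hCconv : Convex ℝ C := hconv.convex_le t
        have hCclosed : IsClosed C := by
          have h := hcont.preimage_isClosed_of_isClosed orth_closed (isClosed_Iic (a := t))
          convert h using 1
          rfl
        have hp₀C : p₀ ∉ C := fun h => absurd h.2 (not_le.mpr ht1)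
        obtain ⟨φ, u, hφ, hu⟩ := geometric_hahn_banach_closed_point hCconv hCclosed hp₀C
        obtain ⟨q, hqdef⟩ : ∃ q : Fin n → ℝ, q = fun i => max (φ (Pi.single i 1)) 0 :=
          ⟨_, rfl⟩
        have hqO : q ∈ Orth n := fun i => by rw [hqdef]; exact le_max_right _ _
        have claim1 : ∀ p ∈ C, inn p q < u := by
          intro p hp
          obtain ⟨p', hp'def⟩ :
              ∃ p' : Fin n → ℝ, p' = fun i => if 0 ≤ φ (Pi.single i 1) then p i else 0 :=
            ⟨_, rfl⟩
          have hp'O : p' ∈ Orth n := fun i => by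
            rw [hp'def]; dsimp only; split
            · exact hp.1 i
            · exact le_rfl
          have hdiff : p - p' ∈ Orth n := by
            intro i
            have hdi : (p - p') i = p i - p' i := rfl
            rw [hdi, hp'def]
            dsimp only
            split
            · simp
            · simpa using hp.1 i
          have hfp' : f p' ≤ t := by
            have hm := hmono p' hp'O (p - p') hdiff
            rw [show p' + (p - p') = p from by abel] at hm
            exact hm.trans hp.2
          have h1 : φ p' < u := hφ p' ⟨hp'O, hfp'⟩
          have h2 : inn p q = φ p' := by
            rw [phi_rep]
            unfold inn
            refine Finset.sum_congr rfl fun i _ => ?_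
            by_cases h : 0 ≤ φ (Pi.single i 1)
            · rw [hqdef, hp'def]
              dsimp only
              rw [if_pos h, max_eq_left h]
            · rw [hqdef, hp'def]
              dsimp only
              rw [if_neg h, max_eq_right (le_of_not_ge h), mul_zero, zero_mul]
          rw [h2]; exact h1
        have claim2 : u < inn p₀ q := by
          refine hu.trans_le ?_
          rw [phi_rep]
          unfold inn
          refine Finset.sum_le_sum fun i _ => ?_
          rw [hqdef]
          exact mul_le_mul_of_nonneg_left (le_max_left _ _) (hp₀ i)
        have hu0 : 0 < u := by
          have h0C : (0 : Fin n → ℝ) ∈ C := ⟨hzero, by rw [hf0]; exact ht0.le⟩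
          have h := hφ 0 h0C
          rwa [map_zero] at h
        have hq0 : q ≠ 0 := by
          intro h
          rw [h] at claim2
          have hz : inn p₀ (0 : Fin n → ℝ) = 0 := by simp [inn]
          rw [hz] at claim2
          linarith
        have hgq : B f q ≤ u / t := by
          refine Real.sSup_le ?_ (by positivity)
          rintro x ⟨r, hr, hr0, rfl⟩
          have hfr : 0 < f r := hpos r hr hr0
          obtain ⟨r', hr'def⟩ : ∃ r' : Fin n → ℝ, r' = (t / f r) • r := ⟨_, rfl⟩
          have hr'O : r' ∈ Orth n := fun i => by
            rw [hr'def]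
            exact mul_nonneg (by positivity) (hr i)
          have hfr' : f r' = t := by
            rw [hr'def, hhom r hr (t / f r) (by positivity)]
            field_simp
          have h3 := claim1 r' ⟨hr'O, hfr'.le⟩
          rw [hr'def, inn_smul_left] at h3
          rw [inn_comm, div_le_div_iff₀ hfr ht0]
          have h4 : (t / f r * inn r q) * f r < u * f r := mul_lt_mul_of_pos_right h3 hfr
          have h5 : (t / f r * inn r q) * f r = inn r q * t := by
            field_simp
          linarith
        have hgqpos : 0 < B f q := hgpos q hqO hq0
        have final : t ≤ inn p₀ q / B f q := by
          rw [le_div_iff₀ hgqpos]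
          calc t * B f q ≤ t * (u / t) := mul_le_mul_of_nonneg_left hgq ht0.le
            _ = u := by field_simp
            _ ≤ inn p₀ q := claim2.le
        have hfin : t ≤ B (B f) p₀ :=
          final.trans (le_csSup (hgbdd p₀) ⟨q, hqO, hq0, rfl⟩)
        linarith
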